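/- Let p ∈ (1/2, 1) and q = 1 − p. For (ψ0, ψ1) ∈ [0,1]² define p̃ = (1−ψ0−ψ1)·p + ψ0 and q̃ = (1−ψ0−ψ1)·q + ψ0, and assume p̃ > 1/2 and q̃ < 1/2. Define H(x,y) = x·ln(x/y) + (1−x)·ln((1−x)/(1−y)) for x, y ∈ (0,1), and set λ̂0(ψ0,ψ1) = H(q,p)/H(q̃,p̃) − 1 and λ̂1(ψ0,ψ1) = H(p,q)/H(p̃,q̃) − 1. Then at every such point all four partial derivatives ∂λ̂0/∂ψ0, ∂λ̂0/∂ψ1, ∂λ̂1/∂ψ0, ∂λ̂1/∂ψ1 are strictly positive. -/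

import Mathlib

private lemma log_bounds {a b : ℝ} (ha : 0 < a) (hab : a < b) :
    b - a < b * (Real.log b - Real.log a) ∧ a * (Real.log b - Real.log a) < b - a := by
  have hb : 0 < b := ha.trans hab
  constructor
  · have h : Real.log (a / b) < a / b - 1 :=
      Real.log_lt_sub_one_of_pos (div_pos ha hb) (by
        intro hc; rw [div_eq_one_iff_eq hb.ne'] at hc; linarith)
    rw [Real.log_div ha.ne' hb.ne'] at h
    have h2 := mul_lt_mul_of_pos_left h hb
    have h3 : b * (a / b - 1) = a - b := by field_simp
    nlinarith [h2, h3]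
  · have h : Real.log (b / a) < b / a - 1 :=
      Real.log_lt_sub_one_of_pos (div_pos hb ha) (by
        intro hc; rw [div_eq_one_iff_eq ha.ne'] at hc; linarith)
    rw [Real.log_div hb.ne' ha.ne'] at h
    have h2 := mul_lt_mul_of_pos_left h ha
    have h3 : a * (b / a - 1) = b - a := by field_simp
    nlinarith [h2, h3]

private lemma H_pos {x y : ℝ} (hx0 : 0 < x) (hx1 : x < 1) (hy0 : 0 < y) (hy1 : y < 1)
    (hxy : x ≠ y) :
    0 < x * Real.log (x / y) + (1 - x) * Real.log ((1 - x) / (1 - y)) := by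
  rw [Real.log_div hx0.ne' hy0.ne',
    Real.log_div (by linarith : (1:ℝ) - x ≠ 0) (by linarith : (1:ℝ) - y ≠ 0)]
  rcases hxy.lt_or_gt with h | h
  · have b1 := (log_bounds hx0 h).2
    have b2 := (log_bounds (by linarith : (0:ℝ) < 1 - y) (by linarith : 1 - y < 1 - x)).1
    nlinarith [b1, b2]
  · have b1 := (log_bounds hy0 h).1
    have b2 := (log_bounds (by linarith : (0:ℝ) < 1 - x) (by linarith : 1 - x < 1 - y)).2
    nlinarith [b1, b2]

set_option maxHeartbeats 1000000 in
private lemma core {p u v : ℝ} (hp : 1/2 < p) (hp1 : p < 1)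
    (hu0 : 0 < u) (huv : u < v) (hv1 : v < 1)
    (h1 : (1-p) * v ≤ p * u) (h2 : (1-p) * (1-u) ≤ p * (1-v)) :
    (1-p) * ((1-u)/(1-v) - u/v)
        < p * ((Real.log v - Real.log u) + (Real.log (1-u) - Real.log (1-v)))
  ∧ (1-p) * ((Real.log v - Real.log u) + (Real.log (1-u) - Real.log (1-v)))
        < p * ((1-u)/(1-v) - u/v)
  ∧ (1-p) * ((Real.log v - Real.log u) + (Real.log (1-u) - Real.log (1-v)))
        < p * (v/u - (1-v)/(1-u))
  ∧ (1-p) * (v/u - (1-v)/(1-u))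
        < p * ((Real.log v - Real.log u) + (Real.log (1-u) - Real.log (1-v))) := by
  have hv0 : 0 < v := hu0.trans huv
  have hu1 : u < 1 := huv.trans hv1
  have h1u : (0:ℝ) < 1 - u := by linarith
  have h1v : (0:ℝ) < 1 - v := by linarith
  have hp0 : (0:ℝ) < p := by linarith
  have hvu : (0:ℝ) < v - u := by linarith
  obtain ⟨b1, b1'⟩ := log_bounds hu0 huv
  obtain ⟨b2, b2'⟩ := log_bounds h1v (by linarith : 1 - v < 1 - u)
  have hMv : (1-u)/(1-v) - u/v = (v-u)/(v*(1-v)) := by field_simp; ring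
  have hMu : v/u - (1-v)/(1-u) = (v-u)/(u*(1-u)) := by field_simp; ring
  refine ⟨?_, ?_, ?_, ?_⟩
  · rw [hMv, mul_div_assoc' (1-p), div_lt_iff₀ (mul_pos hv0 h1v)]
    have g : (1-p)*(v-u)*(1-u)
        < p*((Real.log v - Real.log u) + (Real.log (1-u) - Real.log (1-v)))*(v*(1-v))*(1-u) := by
      nlinarith [mul_lt_mul_of_pos_left b1 (mul_pos hp0 (mul_pos h1v h1u)),
        mul_lt_mul_of_pos_left b2 (mul_pos hp0 (mul_pos hv0 h1v)),
        mul_le_mul_of_nonneg_left h2 (le_of_lt (mul_pos hv0 hvu)),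
        mul_le_mul_of_nonneg_right (by linarith : (1:ℝ)-p ≤ p)
          (le_of_lt (mul_pos hvu (mul_pos h1v h1u)))]
    nlinarith [g]
  · rw [hMv, ← mul_div_assoc, lt_div_iff₀ (mul_pos hv0 h1v)]
    nlinarith [mul_le_mul_of_nonneg_right h1
        (le_of_lt (mul_pos h1v (by nlinarith [b1] : (0:ℝ) < Real.log v - Real.log u))),
      mul_lt_mul_of_pos_left b1' (mul_pos hp0 h1v),
      mul_lt_mul_of_pos_right (by linarith : (1:ℝ)-p < p)
        (mul_pos (mul_pos hv0 h1v) (by nlinarith [b2] : (0:ℝ) < Real.log (1-u) - Real.log (1-v))),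
      mul_lt_mul_of_pos_left b2' (mul_pos hp0 hv0)]
  · rw [hMu, ← mul_div_assoc, lt_div_iff₀ (mul_pos hu0 h1u)]
    nlinarith [mul_lt_mul_of_pos_left b1' (mul_pos (by linarith : (0:ℝ) < 1-p) h1u),
      mul_lt_mul_of_pos_right (by linarith : (1:ℝ)-p < p) (mul_pos h1u hvu),
      mul_le_mul_of_nonneg_right h2
        (le_of_lt (mul_pos hu0 (by nlinarith [b2] : (0:ℝ) < Real.log (1-u) - Real.log (1-v)))),
      mul_lt_mul_of_pos_left b2' (mul_pos hp0 hu0)]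
  · rw [hMu, mul_div_assoc' (1-p), div_lt_iff₀ (mul_pos hu0 h1u)]
    have g : (1-p)*(v-u)*v
        < p*((Real.log v - Real.log u) + (Real.log (1-u) - Real.log (1-v)))*(u*(1-u))*v := by
      nlinarith [mul_lt_mul_of_pos_left b1 (mul_pos hp0 (mul_pos hu0 h1u)),
        mul_le_mul_of_nonneg_right h1 (le_of_lt (mul_pos hvu h1u)),
        mul_lt_mul_of_pos_left b2 (mul_pos hp0 (mul_pos hu0 hv0)),
        mul_lt_mul_of_pos_right (by linarith : (1:ℝ)-p < p)
          (mul_pos (mul_pos hu0 hv0) hvu)]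
    nlinarith [g]


private lemma hasDerivAt_Hcomp {fu fv : ℝ → ℝ} {t u v du dv : ℝ}
    (hfu : HasDerivAt fu du t) (hfv : HasDerivAt fv dv t)
    (hu : fu t = u) (hv : fv t = v)
    (h0u : 0 < u) (h1u : u < 1) (h0v : 0 < v) (h1v : v < 1) :
    HasDerivAt (fun s => fu s * Real.log (fu s / fv s)
        + (1 - fu s) * Real.log ((1 - fu s) / (1 - fv s)))
      (du * ((Real.log u - Real.log v) - (Real.log (1-u) - Real.log (1-v)))
        + dv * ((1-u)/(1-v) - u/v)) t := by
  have hfu1 : HasDerivAt (fun s => 1 - fu s) (-du) t := hfu.const_sub 1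
  have hfv1 : HasDerivAt (fun s => 1 - fv s) (-dv) t := hfv.const_sub 1
  have hlogu : HasDerivAt (fun s => Real.log (fu s)) (du / u) t := by
    have h := hfu.log (by rw [hu]; exact h0u.ne')
    rwa [hu] at h
  have hlogv : HasDerivAt (fun s => Real.log (fv s)) (dv / v) t := by
    have h := hfv.log (by rw [hv]; exact h0v.ne')
    rwa [hv] at h
  have hlogu1 : HasDerivAt (fun s => Real.log (1 - fu s)) (-du / (1 - u)) t := by
    have h := hfu1.log (by simp only [hu]; intro hc; nlinarith [hc])
    simp only [hu] at h
    exact h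
  have hlogv1 : HasDerivAt (fun s => Real.log (1 - fv s)) (-dv / (1 - v)) t := by
    have h := hfv1.log (by simp only [hv]; intro hc; nlinarith [hc])
    simp only [hv] at h
    exact h
  have hg : HasDerivAt (fun s => fu s * (Real.log (fu s) - Real.log (fv s))
      + (1 - fu s) * (Real.log (1 - fu s) - Real.log (1 - fv s)))
      (du * (Real.log (fu t) - Real.log (fv t)) + fu t * (du / u - dv / v)
        + (-du * (Real.log (1 - fu t) - Real.log (1 - fv t))
          + (1 - fu t) * (-du / (1 - u) - -dv / (1 - v)))) t :=
    (hfu.mul (hlogu.sub hlogv)).add (hfu1.mul (hlogu1.sub hlogv1))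
  rw [hu, hv] at hg
  have heq : (fun s => fu s * Real.log (fu s / fv s)
      + (1 - fu s) * Real.log ((1 - fu s) / (1 - fv s)))
      =ᶠ[nhds t] (fun s => fu s * (Real.log (fu s) - Real.log (fv s))
      + (1 - fu s) * (Real.log (1 - fu s) - Real.log (1 - fv s))) := by
    have e1 : ∀ᶠ s in nhds t, fu s ≠ 0 :=
      hfu.continuousAt.eventually_ne (by rw [hu]; exact h0u.ne')
    have e2 : ∀ᶠ s in nhds t, fv s ≠ 0 :=
      hfv.continuousAt.eventually_ne (by rw [hv]; exact h0v.ne')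
    have e3 : ∀ᶠ s in nhds t, (1 - fu s) ≠ 0 :=
      hfu1.continuousAt.eventually_ne (by simp only [hu]; intro hc; nlinarith [hc])
    have e4 : ∀ᶠ s in nhds t, (1 - fv s) ≠ 0 :=
      hfv1.continuousAt.eventually_ne (by simp only [hv]; intro hc; nlinarith [hc])
    filter_upwards [e1, e2, e3, e4] with s h1 h2 h3 h4
    rw [Real.log_div h1 h2, Real.log_div h3 h4]
  have hfinal := hg.congr_of_eventuallyEq heq
  refine hfinal.congr_deriv ?_
  have hu' : u ≠ 0 := h0u.ne'
  have hv' : v ≠ 0 := h0v.ne'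
  have hu1' : (1:ℝ) - u ≠ 0 := by intro hc; nlinarith [hc]
  have hv1' : (1:ℝ) - v ≠ 0 := by intro hc; nlinarith [hc]
  field_simp
  ring

private lemma case_lemma {C : ℝ} (hC : 0 < C) {fu fv : ℝ → ℝ} {t u v du dv : ℝ}
    (hfu : HasDerivAt fu du t) (hfv : HasDerivAt fv dv t)
    (hut : fu t = u) (hvt : fv t = v)
    (h0u : 0 < u) (h1u : u < 1) (h0v : 0 < v) (h1v : v < 1) (huv : u ≠ v)
    (hD : du * ((Real.log u - Real.log v) - (Real.log (1-u) - Real.log (1-v)))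
        + dv * ((1-u)/(1-v) - u/v) < 0) :
    ∃ d > (0:ℝ), HasDerivAt (fun x => C / (fu x * Real.log (fu x / fv x)
        + (1 - fu x) * Real.log ((1 - fu x) / (1 - fv x))) - 1) d t := by
  have hHd := hasDerivAt_Hcomp hfu hfv hut hvt h0u h1u h0v h1v
  set D := du * ((Real.log u - Real.log v) - (Real.log (1-u) - Real.log (1-v)))
    + dv * ((1-u)/(1-v) - u/v) with hDdef
  set F : ℝ → ℝ := fun x => fu x * Real.log (fu x / fv x)
    + (1 - fu x) * Real.log ((1 - fu x) / (1 - fv x)) with hF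
  have hFt : F t = u * Real.log (u / v) + (1 - u) * Real.log ((1 - u) / (1 - v)) := by
    rw [hF]; simp only [hut, hvt]
  have hFpos : 0 < F t := by
    rw [hFt]
    exact H_pos h0u h1u h0v h1v huv
  refine ⟨(0 * F t - C * D) / (F t) ^ 2, ?_, ?_⟩
  · have : 0 * F t - C * D = C * (-D) := by ring
    rw [this]
    exact div_pos (mul_pos hC (by linarith)) (pow_pos hFpos 2)
  · exact ((hasDerivAt_const t C).div hHd hFpos.ne').sub_const 1

/-- Part 1 of Lemma 1 of the paper: the asymptotic relative increases `λ̂₀`, `λ̂₁` of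
the legitimate fusion center's expected sample size caused by a stochastic encryption
`(ψ0, ψ1)` have strictly positive partial derivatives in both flip probabilities. -/
theorem stmt_13 (p : ℝ) (hp : 1 / 2 < p) (hp1 : p < 1) (q : ℝ) (hq : q = 1 - p)
    (H : ℝ → ℝ → ℝ)
    (hH : ∀ x y, H x y = x * Real.log (x / y) + (1 - x) * Real.log ((1 - x) / (1 - y)))
    (ptf qtf : ℝ → ℝ → ℝ)
    (hptf : ∀ x y, ptf x y = (1 - x - y) * p + x)
    (hqtf : ∀ x y, qtf x y = (1 - x - y) * q + x)
    (lam0 lam1 : ℝ → ℝ → ℝ)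
    (hl0 : ∀ x y, lam0 x y = H q p / H (qtf x y) (ptf x y) - 1)
    (hl1 : ∀ x y, lam1 x y = H p q / H (ptf x y) (qtf x y) - 1) :
    ∀ ψ0 ψ1 : ℝ, ψ0 ∈ Set.Icc (0 : ℝ) 1 → ψ1 ∈ Set.Icc (0 : ℝ) 1 →
      1 / 2 < ptf ψ0 ψ1 → qtf ψ0 ψ1 < 1 / 2 →
      (∃ d > (0 : ℝ), HasDerivAt (fun x => lam0 x ψ1) d ψ0) ∧
      (∃ d > (0 : ℝ), HasDerivAt (fun y => lam0 ψ0 y) d ψ1) ∧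
      (∃ d > (0 : ℝ), HasDerivAt (fun x => lam1 x ψ1) d ψ0) ∧
      (∃ d > (0 : ℝ), HasDerivAt (fun y => lam1 ψ0 y) d ψ1) := by
  subst hq
  intro ψ0 ψ1 hψ0 hψ1 hV2 hU2
  obtain ⟨h00, h01⟩ := hψ0
  obtain ⟨h10, h11⟩ := hψ1
  rw [hptf] at hV2
  rw [hqtf] at hU2
  have hq0 : (0:ℝ) < 1 - p := by linarith
  have hp0 : (0:ℝ) < p := by linarith
  have hs : 0 < 1 - ψ0 - ψ1 := by nlinarith [hV2, hU2]
  have hU0 : 0 < (1 - ψ0 - ψ1) * (1 - p) + ψ0 := by nlinarith [mul_pos hs hq0]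
  have hV1 : (1 - ψ0 - ψ1) * p + ψ0 < 1 := by nlinarith [mul_pos hs hq0]
  have hUV : (1 - ψ0 - ψ1) * (1 - p) + ψ0 < (1 - ψ0 - ψ1) * p + ψ0 := by linarith
  have hU1 : (1 - ψ0 - ψ1) * (1 - p) + ψ0 < 1 := by linarith
  have hV0 : 0 < (1 - ψ0 - ψ1) * p + ψ0 := by linarith
  have hS1 : (1 - p) * ((1 - ψ0 - ψ1) * p + ψ0) ≤ p * ((1 - ψ0 - ψ1) * (1 - p) + ψ0) := by
    nlinarith [mul_nonneg h00 (by linarith : (0:ℝ) ≤ 2 * p - 1)]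
  have hS2 : (1 - p) * (1 - ((1 - ψ0 - ψ1) * (1 - p) + ψ0))
      ≤ p * (1 - ((1 - ψ0 - ψ1) * p + ψ0)) := by
    nlinarith [mul_nonneg h10 (by linarith : (0:ℝ) ≤ 2 * p - 1)]
  obtain ⟨cA, cB, cC, cD⟩ := core hp hp1 hU0 hUV hV1 hS1 hS2
  have hC0 : 0 < H (1 - p) p := by
    rw [hH]
    exact H_pos (by linarith) (by linarith) (by linarith) hp1 (by intro hc; linarith)
  have hC1 : 0 < H p (1 - p) := by
    rw [hH]
    exact H_pos hp0 hp1 (by linarith) (by linarith) (by intro hc; linarith)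
  -- linear derivative facts
  have hbx : HasDerivAt (fun x : ℝ => 1 - x - ψ1) (-1) ψ0 := by
    simpa using ((hasDerivAt_id ψ0).const_sub 1).sub_const ψ1
  have hby : HasDerivAt (fun y : ℝ => 1 - ψ0 - y) (-1) ψ1 := by
    simpa using (hasDerivAt_id ψ1).const_sub (1 - ψ0)
  have L1 : HasDerivAt (fun x : ℝ => (1 - x - ψ1) * (1 - p) + x) p ψ0 := by
    have h := (hbx.mul_const (1 - p)).add (hasDerivAt_id ψ0)
    refine h.congr_deriv ?_
    ring
  have L2 : HasDerivAt (fun x : ℝ => (1 - x - ψ1) * p + x) (1 - p) ψ0 := by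
    have h := (hbx.mul_const p).add (hasDerivAt_id ψ0)
    refine h.congr_deriv ?_
    ring
  have L3 : HasDerivAt (fun y : ℝ => (1 - ψ0 - y) * (1 - p) + ψ0) (-(1 - p)) ψ1 := by
    have h := (hby.mul_const (1 - p)).add_const ψ0
    refine h.congr_deriv ?_
    ring
  have L4 : HasDerivAt (fun y : ℝ => (1 - ψ0 - y) * p + ψ0) (-p) ψ1 := by
    have h := (hby.mul_const p).add_const ψ0
    refine h.congr_deriv ?_
    ring
  refine ⟨?_, ?_, ?_, ?_⟩
  · have e : (fun x => lam0 x ψ1) = (fun x => H (1 - p) p /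
        (((1 - x - ψ1) * (1 - p) + x)
            * Real.log (((1 - x - ψ1) * (1 - p) + x) / ((1 - x - ψ1) * p + x))
          + (1 - ((1 - x - ψ1) * (1 - p) + x))
            * Real.log ((1 - ((1 - x - ψ1) * (1 - p) + x)) / (1 - ((1 - x - ψ1) * p + x)))) - 1) := by
      funext x
      rw [hl0, hH (qtf x ψ1) (ptf x ψ1), hqtf, hptf]
    rw [e]
    exact case_lemma (fu := fun x : ℝ => (1 - x - ψ1) * (1 - p) + x)
      (fv := fun x : ℝ => (1 - x - ψ1) * p + x) hC0 L1 L2 rfl rfl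
      hU0 hU1 hV0 hV1 (ne_of_lt hUV) (by linarith [cA])
  · have e : (fun y => lam0 ψ0 y) = (fun y => H (1 - p) p /
        (((1 - ψ0 - y) * (1 - p) + ψ0)
            * Real.log (((1 - ψ0 - y) * (1 - p) + ψ0) / ((1 - ψ0 - y) * p + ψ0))
          + (1 - ((1 - ψ0 - y) * (1 - p) + ψ0))
            * Real.log ((1 - ((1 - ψ0 - y) * (1 - p) + ψ0)) / (1 - ((1 - ψ0 - y) * p + ψ0)))) - 1) := by
      funext y
      rw [hl0, hH (qtf ψ0 y) (ptf ψ0 y), hqtf, hptf]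
    rw [e]
    exact case_lemma (fu := fun y : ℝ => (1 - ψ0 - y) * (1 - p) + ψ0)
      (fv := fun y : ℝ => (1 - ψ0 - y) * p + ψ0) hC0 L3 L4 rfl rfl
      hU0 hU1 hV0 hV1 (ne_of_lt hUV) (by linarith [cB])
  · have e : (fun x => lam1 x ψ1) = (fun x => H p (1 - p) /
        (((1 - x - ψ1) * p + x)
            * Real.log (((1 - x - ψ1) * p + x) / ((1 - x - ψ1) * (1 - p) + x))
          + (1 - ((1 - x - ψ1) * p + x))
            * Real.log ((1 - ((1 - x - ψ1) * p + x)) / (1 - ((1 - x - ψ1) * (1 - p) + x)))) - 1) := by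
      funext x
      rw [hl1, hH (ptf x ψ1) (qtf x ψ1), hqtf, hptf]
    rw [e]
    exact case_lemma (fu := fun x : ℝ => (1 - x - ψ1) * p + x)
      (fv := fun x : ℝ => (1 - x - ψ1) * (1 - p) + x) hC1 L2 L1 rfl rfl
      hV0 hV1 hU0 hU1 (ne_of_gt hUV) (by linarith [cC])
  · have e : (fun y => lam1 ψ0 y) = (fun y => H p (1 - p) /
        (((1 - ψ0 - y) * p + ψ0)
            * Real.log (((1 - ψ0 - y) * p + ψ0) / ((1 - ψ0 - y) * (1 - p) + ψ0))
          + (1 - ((1 - ψ0 - y) * p + ψ0))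
            * Real.log ((1 - ((1 - ψ0 - y) * p + ψ0)) / (1 - ((1 - ψ0 - y) * (1 - p) + ψ0)))) - 1) := by
      funext y
      rw [hl1, hH (ptf ψ0 y) (qtf ψ0 y), hqtf, hptf]
    rw [e]
    exact case_lemma (fu := fun y : ℝ => (1 - ψ0 - y) * p + ψ0)
      (fv := fun y : ℝ => (1 - ψ0 - y) * (1 - p) + ψ0) hC1 L4 L3 rfl rfl
      hV0 hV1 hU0 hU1 (ne_of_gt hUV) (by linarith [cD])
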